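/- Let A ∈ M_d(ℤ) ∩ GL_d(ℝ) be a hyperbolic integer matrix whose characteristic polynomial is irreducible over ℚ. Let E^s(A) = {v ∈ ℝ^d : A^k v → 0 as k → +∞} and E^u(A) = {v ∈ ℝ^d : A^{-k} v → 0 as k → +∞}, so that ℝ^d = E^s(A) ⊕ E^u(A). Then for all x, y ∈ ℝ^d there exists a sequence n_m ∈ A^m ℤ^d such that the E^s(A)-component (with respect to this splitting) of y + n_m − x tends to 0 as m → +∞; equivalently, dist(y + n_m, x + E^u(A)) → 0. -/

import Mathlib

/-- A vector of integers viewed as a point of `ℝ^d`. -/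
noncomputable def intVec {d : ℕ} (n : Fin d → ℤ) : EuclideanSpace ℝ (Fin d) :=
  WithLp.toLp 2 fun i => (n i : ℝ)

/-- Matrix-vector multiplication, viewed as a map of `ℝ^d = EuclideanSpace ℝ (Fin d)`. -/
noncomputable def mulVecE {d : ℕ} (A : Matrix (Fin d) (Fin d) ℝ)
    (x : EuclideanSpace ℝ (Fin d)) : EuclideanSpace ℝ (Fin d) :=
  WithLp.toLp 2 (A.mulVec x)

open Filter Module Submodule Topology Matrix Polynomial

namespace Stmt13Aux

/-- finrank over ℤ of a discrete subgroup equals the dimension of its real span. -/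
lemma discrete_finrank_eq {E : Type*} [NormedAddCommGroup E] [NormedSpace ℝ E]
    [FiniteDimensional ℝ E] (L : Submodule ℤ E) [DiscreteTopology L] :
    Module.finrank ℤ L = Module.finrank ℝ (Submodule.span ℝ (L : Set E)) := by
  classical
  let f := (Submodule.span ℝ (L : Set E)).subtype
  let L₀ := L.comap (f.restrictScalars ℤ)
  have h_img : f '' L₀ = L := by
    rw [← LinearMap.coe_restrictScalars ℤ f, ← Submodule.map_coe (f.restrictScalars ℤ),
      Submodule.map_comap_eq_self]
    exact fun x hx ↦ LinearMap.mem_range.mpr ⟨⟨x, Submodule.subset_span hx⟩, rfl⟩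
  haveI hdisc : DiscreteTopology L₀ := by
    refine DiscreteTopology.preimage_of_continuous_injective (L : Set E) ?_
      (Submodule.injective_subtype _)
    exact LinearMap.continuous_of_finiteDimensional f
  haveI hz : IsZLattice ℝ L₀ := ⟨by
    rw [← (Submodule.map_injective_of_injective (Submodule.injective_subtype _)).eq_iff,
      Submodule.map_span, Submodule.map_top, Submodule.range_subtype, h_img]⟩
  have h1 : Module.finrank ℤ L₀ = Module.finrank ℝ (Submodule.span ℝ (L : Set E)) :=
    ZLattice.rank ℝ L₀
  have hmap : L₀.map (f.restrictScalars ℤ) = L := SetLike.ext'_iff.mpr h_img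
  have h3 := (Submodule.equivMapOfInjective (f.restrictScalars ℤ)
    (Submodule.injective_subtype _) L₀).finrank_eq
  rw [hmap] at h3
  rw [← h3]
  exact h1

/-- A closed subgroup containing nonzero elements of arbitrarily small norm, all lying in a
closed subspace `W`, contains a full line `ℝ e` with `e ∈ W`, `‖e‖ = 1`. -/
lemma line_of_small_elements {E : Type*} [NormedAddCommGroup E] [InnerProductSpace ℝ E]
    [FiniteDimensional ℝ E] (G : AddSubgroup E) (hG : IsClosed (G : Set E))
    (W : Submodule ℝ E) (g : ℕ → E) (hmem : ∀ n, g n ∈ G) (hW : ∀ n, g n ∈ W)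
    (hnz : ∀ n, g n ≠ 0) (hsmall : ∀ n, ‖g n‖ ≤ 1 / (n + 1)) :
    ∃ e : E, e ∈ W ∧ ‖e‖ = 1 ∧ ∀ t : ℝ, t • e ∈ G := by
  have hsph : ∀ n, ‖g n‖⁻¹ • g n ∈ Metric.sphere (0 : E) 1 := by
    intro n
    rw [mem_sphere_zero_iff_norm, norm_smul, norm_inv, norm_norm]
    exact inv_mul_cancel₀ (norm_ne_zero_iff.mpr (hnz n))
  obtain ⟨e, hesph, φ, hφmono, hφconv⟩ := (isCompact_sphere (0 : E) 1).tendsto_subseq hsph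
  have hnorm_e : ‖e‖ = 1 := mem_sphere_zero_iff_norm.mp hesph
  have heW : e ∈ W := by
    have hcl : IsClosed (W : Set E) := Submodule.closed_of_finiteDimensional W
    exact hcl.mem_of_tendsto hφconv
      (Filter.Eventually.of_forall fun n => Submodule.smul_mem W _ (hW (φ n)))
  refine ⟨e, heW, hnorm_e, fun t => ?_⟩
  set r : ℕ → ℝ := fun n => ‖g (φ n)‖ with hr
  have hrpos : ∀ n, 0 < r n := fun n => norm_pos_iff.mpr (hnz (φ n))
  have hrlim : Filter.Tendsto r Filter.atTop (nhds 0) := by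
    have hb : ∀ n, r n ≤ 1 / (n + 1) := by
      intro n
      refine (hsmall (φ n)).trans ?_
      have h1 : (n : ℝ) + 1 ≤ (φ n : ℝ) + 1 :=
        add_le_add_left (Nat.cast_le.mpr hφmono.le_apply) 1
      exact one_div_le_one_div_of_le (by positivity) h1
    exact squeeze_zero (fun n => norm_nonneg _) hb tendsto_one_div_add_atTop_nhds_zero_nat
  set sc : ℕ → ℝ := fun n => (⌊t / r n⌋ : ℝ) * r n with hsc
  have hsub : ∀ n, |sc n - t| ≤ r n := by
    intro n
    have h1 : (⌊t / r n⌋ : ℝ) ≤ t / r n := Int.floor_le _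
    have h2 : t / r n < ⌊t / r n⌋ + 1 := Int.lt_floor_add_one _
    have h3 : sc n ≤ t := by
      calc sc n ≤ (t / r n) * r n := mul_le_mul_of_nonneg_right h1 (hrpos n).le
      _ = t := div_mul_cancel₀ t (hrpos n).ne'
    have h4 : t < sc n + r n := by
      calc t = (t / r n) * r n := (div_mul_cancel₀ t (hrpos n).ne').symm
      _ < ((⌊t / r n⌋ : ℝ) + 1) * r n := mul_lt_mul_of_pos_right h2 (hrpos n)
      _ = sc n + r n := by ring
    rw [abs_le]
    constructor <;> linarith
  have hslim : Filter.Tendsto sc Filter.atTop (nhds t) := by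
    have h1 := squeeze_zero_norm (f := fun n => sc n - t)
      (fun n => by simpa [Real.norm_eq_abs] using hsub n) hrlim
    have h2 := h1.add (tendsto_const_nhds (α := ℕ) (x := t) (f := Filter.atTop))
    simpa using h2
  have hc : Filter.Tendsto (fun n => sc n • (‖g (φ n)‖⁻¹ • g (φ n))) Filter.atTop
      (nhds (t • e)) := hslim.smul hφconv
  have hceq : ∀ n, sc n • (‖g (φ n)‖⁻¹ • g (φ n)) = (⌊t / r n⌋ : ℤ) • g (φ n) := by
    intro n
    rw [smul_smul, hsc]
    show ((⌊t / r n⌋ : ℝ) * r n * (r n)⁻¹) • g (φ n) = _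
    rw [mul_assoc, mul_inv_cancel₀ (hrpos n).ne', mul_one]
    exact (Int.cast_smul_eq_zsmul ℝ _ _)
  have hGmem : ∀ n, sc n • (‖g (φ n)‖⁻¹ • g (φ n)) ∈ G := fun n => by
    rw [hceq n]; exact AddSubgroup.zsmul_mem G (hmem (φ n)) _
  exact hG.mem_of_tendsto hc (Filter.Eventually.of_forall hGmem)

variable {d : ℕ} (A : Matrix (Fin d) (Fin d) ℤ)

/-- The real matrix. -/
noncomputable abbrev B : Matrix (Fin d) (Fin d) ℝ := A.map ((↑) : ℤ → ℝ)

/-- The unstable subspace. -/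
noncomputable def U : Submodule ℝ (EuclideanSpace ℝ (Fin d)) where
  carrier := {v | Filter.Tendsto (fun k : ℕ => mulVecE ((B A)⁻¹ ^ k) v) Filter.atTop (nhds 0)}
  add_mem' := by
    intro a b ha hb
    have : ∀ k : ℕ, mulVecE ((B A)⁻¹ ^ k) (a + b)
        = mulVecE ((B A)⁻¹ ^ k) a + mulVecE ((B A)⁻¹ ^ k) b := by
      intro k; show WithLp.toLp 2 (((B A)⁻¹ ^ k).mulVec _) = _
      rw [WithLp.ofLp_add, Matrix.mulVec_add]; rfl
    simp only [Set.mem_setOf_eq, this]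
    simpa using Filter.Tendsto.add ha hb
  zero_mem' := by
    have : ∀ k : ℕ, mulVecE ((B A)⁻¹ ^ k) (0 : EuclideanSpace ℝ (Fin d)) = 0 := by
      intro k; show WithLp.toLp 2 (((B A)⁻¹ ^ k).mulVec _) = _
      rw [WithLp.ofLp_zero, Matrix.mulVec_zero, WithLp.toLp_zero]
    simp only [Set.mem_setOf_eq, this]
    exact tendsto_const_nhds
  smul_mem' := by
    intro c a ha
    have : ∀ k : ℕ, mulVecE ((B A)⁻¹ ^ k) (c • a) = c • mulVecE ((B A)⁻¹ ^ k) a := by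
      intro k; show WithLp.toLp 2 (((B A)⁻¹ ^ k).mulVec _) = _
      rw [WithLp.ofLp_smul,
        Matrix.mulVec_smul]; rfl
    simp only [Set.mem_setOf_eq, this]
    simpa using ha.const_smul c


section Main

variable {d : ℕ}

lemma mulVecE_add (M : Matrix (Fin d) (Fin d) ℝ) (a b : EuclideanSpace ℝ (Fin d)) :
    mulVecE M (a + b) = mulVecE M a + mulVecE M b := by
  show WithLp.toLp 2 (M.mulVec _) = _
  rw [WithLp.ofLp_add, Matrix.mulVec_add]; rfl

lemma mulVecE_smul (M : Matrix (Fin d) (Fin d) ℝ) (c : ℝ) (a : EuclideanSpace ℝ (Fin d)) :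
    mulVecE M (c • a) = c • mulVecE M a := by
  show WithLp.toLp 2 (M.mulVec _) = _
  rw [WithLp.ofLp_smul,
    Matrix.mulVec_smul]; rfl

lemma mulVecE_mul (M N : Matrix (Fin d) (Fin d) ℝ) (a : EuclideanSpace ℝ (Fin d)) :
    mulVecE (M * N) a = mulVecE M (mulVecE N a) := by
  unfold mulVecE
  rw [WithLp.ofLp_toLp, Matrix.mulVec_mulVec]

lemma toEuclideanLin_eq_mulVecE (M : Matrix (Fin d) (Fin d) ℝ) :
    ⇑(Matrix.toEuclideanLin M) = mulVecE M := by
  funext x; exact Matrix.toEuclideanLin_apply M x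

lemma continuous_mulVecE (M : Matrix (Fin d) (Fin d) ℝ) : Continuous (mulVecE M) := by
  rw [← toEuclideanLin_eq_mulVecE]
  exact (Matrix.toEuclideanLin M).continuous_of_finiteDimensional

/-- the lattice `ℤ^d` inside `ℝ^d`. -/
noncomputable def latHom : (Fin d → ℤ) →+ EuclideanSpace ℝ (Fin d) where
  toFun := intVec
  map_zero' := by ext i; simp [intVec]
  map_add' a b := by ext i; show ((a i + b i : ℤ) : ℝ) = _; push_cast; rfl

noncomputable def lat : AddSubgroup (EuclideanSpace ℝ (Fin d)) := (latHom (d := d)).range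

variable (A : Matrix (Fin d) (Fin d) ℤ)

lemma B_int_vec (n : Fin d → ℤ) : mulVecE (B A) (intVec n) = intVec (A.mulVec n) := by
  ext i
  show ((A.map ((Int.castRingHom ℝ) : ℤ → ℝ)).mulVec ((Int.castRingHom ℝ) ∘ n)) i = _
  rw [← RingHom.map_mulVec]
  rfl

lemma U_inv : ∀ v ∈ U A, mulVecE (B A) v ∈ U A := by
  intro v hv
  have hc : Commute (B A) ((B A)⁻¹) := by
    rw [Matrix.inv_def]
    exact Commute.smul_right
      (by rw [Commute, SemiconjBy, Matrix.mul_adjugate, Matrix.adjugate_mul]) _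
  have hcomm : ∀ k : ℕ, (B A)⁻¹ ^ k * B A = B A * (B A)⁻¹ ^ k :=
    fun k => (hc.symm.pow_left k).eq
  have h : ∀ k : ℕ, mulVecE ((B A)⁻¹ ^ k) (mulVecE (B A) v)
      = mulVecE (B A) (mulVecE ((B A)⁻¹ ^ k) v) := by
    intro k
    rw [← mulVecE_mul, hcomm k, mulVecE_mul]
  show Filter.Tendsto _ _ _
  simp only [h]
  have := ((continuous_mulVecE (B A)).tendsto 0).comp hv
  simpa [show mulVecE (B A) 0 = 0 from by
    show WithLp.toLp 2 ((B A).mulVec (WithLp.ofLp 0)) = _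
    rw [WithLp.ofLp_zero, Matrix.mulVec_zero, WithLp.toLp_zero], Function.comp_def] using this

/-- The group generated by the lattice and the unstable space. -/
noncomputable def G0 : AddSubgroup (EuclideanSpace ℝ (Fin d)) := lat ⊔ (U A).toAddSubgroup

/-- Its closure. -/
noncomputable def Gc : AddSubgroup (EuclideanSpace ℝ (Fin d)) := (G0 A).topologicalClosure

/-- The maximal linear subspace contained in `Gc`. -/
noncomputable def V : Submodule ℝ (EuclideanSpace ℝ (Fin d)) where
  carrier := {v | ∀ t : ℝ, t • v ∈ Gc A}
  add_mem' := by
    intro a b ha hb t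
    rw [smul_add]
    exact AddSubgroup.add_mem _ (ha t) (hb t)
  zero_mem' := by
    intro t
    rw [smul_zero]
    exact AddSubgroup.zero_mem _
  smul_mem' := by
    intro c v hv t
    rw [smul_smul]
    exact hv (t * c)

lemma V_subset_Gc : ∀ v ∈ V A, v ∈ Gc A := by
  intro v hv
  simpa using hv 1

lemma U_le_V : U A ≤ V A := by
  intro u hu t
  exact (AddSubgroup.le_topologicalClosure _)
    (AddSubgroup.mem_sup_right (Submodule.smul_mem _ t hu))

lemma Gc_inv : ∀ g ∈ Gc A, mulVecE (B A) g ∈ Gc A := by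
  intro g hg
  have h0 : ∀ h ∈ G0 A, mulVecE (B A) h ∈ G0 A := by
    intro h hh
    obtain ⟨l, hl, u, hu, rfl⟩ := AddSubgroup.mem_sup.mp hh
    obtain ⟨n, rfl⟩ := hl
    rw [mulVecE_add]
    refine AddSubgroup.add_mem _ (AddSubgroup.mem_sup_left ?_) (AddSubgroup.mem_sup_right ?_)
    · exact ⟨A.mulVec n, (B_int_vec A n).symm⟩
    · exact U_inv A u hu
  exact map_mem_closure (continuous_mulVecE (B A)) hg h0

lemma V_inv : ∀ v ∈ V A, mulVecE (B A) v ∈ V A := by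
  intro v hv t
  rw [← mulVecE_smul]
  exact Gc_inv A _ (hv t)


lemma abs_prod_le_one {s : Multiset ℂ} (h : ∀ x ∈ s, ‖x‖ ≤ 1) :
    ‖s.prod‖ ≤ 1 := by
  induction s using Multiset.induction with
  | empty => simp
  | cons a s ih =>
    rw [Multiset.prod_cons, norm_mul]
    have h1 := h a (Multiset.mem_cons_self a s)
    have h2 := ih fun x hx => h x (Multiset.mem_cons_of_mem hx)
    have h3 := norm_nonneg a
    have h4 := norm_nonneg s.prod
    nlinarith

lemma exists_eps : ∃ ε : ℝ, 0 < ε ∧ ∀ g ∈ Gc A, g ∈ (V A)ᗮ → ‖g‖ < ε → g = 0 := by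
  by_contra hcon
  push_neg at hcon
  have H : ∀ n : ℕ, ∃ g, g ∈ Gc A ∧ g ∈ (V A)ᗮ ∧ g ≠ 0 ∧ ‖g‖ ≤ 1 / (n + 1) := by
    intro n
    obtain ⟨g, hg1, hg2, hg3, hg4⟩ := hcon (1 / (n + 1)) (by positivity)
    exact ⟨g, hg1, hg2, hg4, le_of_lt hg3⟩
  choose g hg1 hg2 hg4 hg3 using H
  obtain ⟨e, heW, hen, he⟩ := line_of_small_elements (Gc A)
    (AddSubgroup.isClosed_topologicalClosure _) ((V A)ᗮ) g hg1 hg2 hg4 hg3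
  have heV : e ∈ V A := he
  have : e = 0 := by
    have h0 := (Submodule.mem_orthogonal _ _).mp heW e heV
    exact inner_self_eq_zero.mp h0
  rw [this] at hen
  norm_num at hen

lemma U_nontrivial (hd : d ≠ 0) (hdet : (B A).det ≠ 0)
    (hhyp : ∀ μ : ℂ, ((A.map ((↑) : ℤ → ℂ)).charpoly).IsRoot μ → ‖μ‖ ≠ 1) :
    ∃ v : EuclideanSpace ℝ (Fin d), v ≠ 0 ∧ v ∈ U A := by
  classical
  set Mc : Matrix (Fin d) (Fin d) ℂ := A.map ((↑) : ℤ → ℂ) with hMc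
  have hAdet : A.det ≠ 0 := by
    intro h
    apply hdet
    have h1 := RingHom.map_det (Int.castRingHom ℝ) A
    rw [RingHom.mapMatrix_apply] at h1
    simp only [Int.coe_castRingHom] at h1
    rw [show (B A) = A.map ((↑) : ℤ → ℝ) from rfl, ← h1, h, Int.cast_zero]
  have hMcdet : Mc.det = ((A.det : ℤ) : ℂ) := by
    have h1 := RingHom.map_det (Int.castRingHom ℂ) A
    rw [RingHom.mapMatrix_apply] at h1
    simp only [Int.coe_castRingHom] at h1
    rw [hMc, ← h1]
  have hdet1 : 1 ≤ ‖Mc.det‖ := by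
    rw [hMcdet]
    rw [show ((A.det : ℤ) : ℂ) = (((A.det : ℤ) : ℝ) : ℂ) from (Complex.ofReal_intCast _).symm]
    rw [Complex.norm_real, Real.norm_eq_abs]
    rw [show |((A.det : ℤ) : ℝ)| = ((|A.det| : ℤ) : ℝ) by push_cast; ring]
    exact_mod_cast Int.one_le_abs hAdet
  have hdim : Mc.charpoly.natDegree = d := by
    rw [Matrix.charpoly_natDegree_eq_dim]
    exact Fintype.card_fin d
  have hcard : Mc.charpoly.roots.card = d := by
    rw [Polynomial.splits_iff_card_roots.mp (IsAlgClosed.splits Mc.charpoly)]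
    exact hdim
  have hex : ∃ μ ∈ Mc.charpoly.roots, 1 ≤ ‖μ‖ := by
    by_contra hno
    push_neg at hno
    have hne : Mc.charpoly.roots ≠ 0 := by
      intro h
      rw [h] at hcard
      simp at hcard
      exact hd hcard.symm
    obtain ⟨μ₁, hμ₁⟩ := Multiset.exists_mem_of_ne_zero hne
    obtain ⟨t, ht⟩ := Multiset.exists_cons_of_mem hμ₁
    have h1 : ‖Mc.charpoly.roots.prod‖ < 1 := by
      rw [ht, Multiset.prod_cons, norm_mul]
      have ha := hno μ₁ hμ₁
      have hb : ‖t.prod‖ ≤ 1 :=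
        abs_prod_le_one fun x hx =>
          le_of_lt (hno x (by rw [ht]; exact Multiset.mem_cons_of_mem hx))
      have h3 := norm_nonneg μ₁
      have h4 := norm_nonneg t.prod
      nlinarith
    rw [← Matrix.det_eq_prod_roots_charpoly] at h1
    linarith
  obtain ⟨μ, hμroot, hμ1⟩ := hex
  have hμisroot : Mc.charpoly.IsRoot μ := Polynomial.isRoot_of_mem_roots hμroot
  have hμgt : 1 < ‖μ‖ := by
    rcases lt_or_eq_of_le hμ1 with h | h
    · exact h
    · exact absurd h.symm (by simpa using hhyp μ hμisroot)
  have hμ0 : μ ≠ 0 := by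
    intro h
    rw [h] at hμgt
    norm_num at hμgt
  -- eigenvector
  have hdet0 : (μ • (1 : Matrix (Fin d) (Fin d) ℂ) - Mc).det = 0 := by
    have hev : Mc.charpoly.eval μ = (μ • (1 : Matrix (Fin d) (Fin d) ℂ) - Mc).det := by
      have h1 := RingHom.map_det (Polynomial.evalRingHom μ) (Matrix.charmatrix Mc)
      have h2 : (Matrix.charmatrix Mc).map ⇑(Polynomial.evalRingHom μ)
          = μ • (1 : Matrix (Fin d) (Fin d) ℂ) - Mc := by
        ext i j
        by_cases hij : i = j <;>
          simp [hij, Matrix.charmatrix_apply, Matrix.diagonal_apply, Matrix.one_apply,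
            Matrix.sub_apply, Matrix.smul_apply]
      rw [Matrix.charpoly]
      calc (Matrix.charmatrix Mc).det.eval μ
          = (Polynomial.evalRingHom μ) (Matrix.charmatrix Mc).det := rfl
        _ = ((Matrix.charmatrix Mc).map ⇑(Polynomial.evalRingHom μ)).det := h1
        _ = (μ • (1 : Matrix (Fin d) (Fin d) ℂ) - Mc).det := by rw [h2]
    rw [← hev]
    exact hμisroot
  obtain ⟨wc, hwc0, hwc⟩ := Matrix.exists_mulVec_eq_zero_iff.mpr hdet0
  have heig : Mc.mulVec wc = μ • wc := by
    rw [Matrix.sub_mulVec, Matrix.smul_mulVec, Matrix.one_mulVec] at hwc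
    have := sub_eq_zero.mp hwc
    exact this.symm
  have hMcdetne : Mc.det ≠ 0 := by
    intro h
    rw [h] at hdet1
    norm_num at hdet1
  have hMinv : Mc⁻¹.mulVec wc = μ⁻¹ • wc := by
    have h1 : Mc⁻¹.mulVec (Mc.mulVec wc) = wc := by
      rw [Matrix.mulVec_mulVec, Matrix.nonsing_inv_mul _ (Ne.isUnit hMcdetne),
        Matrix.one_mulVec]
    rw [heig, Matrix.mulVec_smul] at h1
    exact ((inv_smul_eq_iff₀ hμ0).mpr h1.symm).symm
  have hpow : ∀ k : ℕ, (Mc⁻¹ ^ k).mulVec wc = (μ⁻¹ ^ k) • wc := by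
    intro k
    induction k with
    | zero => simp [Matrix.one_mulVec]
    | succ k ih =>
      rw [pow_succ, ← Matrix.mulVec_mulVec, hMinv, Matrix.mulVec_smul, ih, smul_smul,
        ← pow_succ']
  -- bridge to ℝ
  have hBC : (B A).map ⇑Complex.ofRealHom = Mc := by
    rw [show (B A) = A.map ((↑) : ℤ → ℝ) from rfl, Matrix.map_map, hMc]
    congr 1
  have hInv : ((B A)⁻¹).map ⇑Complex.ofRealHom = Mc⁻¹ := by
    have h1 : Mc * ((B A)⁻¹).map ⇑Complex.ofRealHom = 1 := by
      rw [← hBC, ← Matrix.map_mul, Matrix.mul_nonsing_inv _ (Ne.isUnit hdet)]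
      exact Matrix.map_one _ (map_zero _) (map_one _)
    exact (Matrix.inv_eq_right_inv h1).symm
  have hmk : ∀ k : ℕ, ((B A)⁻¹ ^ k).map ⇑Complex.ofRealHom = Mc⁻¹ ^ k := by
    intro k
    rw [← hInv, ← RingHom.mapMatrix_apply, ← RingHom.mapMatrix_apply, map_pow]
  have key : ∀ (φ : ℂ →ₗ[ℝ] ℝ) (k : ℕ) (i : Fin d),
      (((B A)⁻¹ ^ k).mulVec fun j => φ (wc j)) i = φ (μ⁻¹ ^ k * wc i) := by
    intro φ k i
    have h1 : (((B A)⁻¹ ^ k).mulVec fun j => φ (wc j)) i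
        = φ (((Mc⁻¹ ^ k).mulVec wc) i) := by
      rw [← hmk k]
      show ∑ j, ((B A)⁻¹ ^ k) i j * φ (wc j)
          = φ (∑ j, (((B A)⁻¹ ^ k).map ⇑Complex.ofRealHom) i j * wc j)
      rw [map_sum]
      refine Finset.sum_congr rfl fun j _ => ?_
      rw [show (((B A)⁻¹ ^ k).map ⇑Complex.ofRealHom) i j
        = (((((B A)⁻¹ ^ k)) i j : ℝ) : ℂ) from rfl, ← Complex.real_smul, _root_.map_smul,
        smul_eq_mul]
    rw [h1, hpow k]
    simp [smul_eq_mul]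
  have hnormlt : ‖μ⁻¹‖ < 1 := by
    rw [norm_inv]
    exact inv_lt_one_of_one_lt₀ hμgt
  have hUmem : ∀ (φ : ℂ →ₗ[ℝ] ℝ),
      (WithLp.toLp 2 (fun j => φ (wc j)) : EuclideanSpace ℝ (Fin d)) ∈ U A := by
    intro φ
    show Filter.Tendsto _ _ _
    have hpi : Filter.Tendsto (fun k : ℕ => (fun i => φ (μ⁻¹ ^ k * wc i) : Fin d → ℝ))
        Filter.atTop (nhds 0) := by
      rw [tendsto_pi_nhds]
      intro i
      have h2 : Filter.Tendsto (fun k : ℕ => μ⁻¹ ^ k * wc i) Filter.atTop (nhds 0) := by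
        simpa using (tendsto_pow_atTop_nhds_zero_of_norm_lt_one hnormlt).mul_const (wc i)
      have h3 := ((φ.continuous_of_finiteDimensional).tendsto 0).comp h2
      simpa [map_zero, Function.comp_def] using h3
    have heq : (fun k : ℕ => mulVecE ((B A)⁻¹ ^ k) (WithLp.toLp 2 fun j => φ (wc j)))
        = fun k : ℕ => (WithLp.toLp 2 (fun i => φ (μ⁻¹ ^ k * wc i)) : EuclideanSpace ℝ (Fin d)) := by
      funext k
      ext i
      exact key φ k i
    rw [heq]
    have hpi' := ((PiLp.continuous_toLp 2 (fun _ : Fin d => ℝ)).tendsto 0).comp hpi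
    rw [WithLp.toLp_zero] at hpi'
    exact hpi'
  obtain ⟨i₀, hi₀⟩ := Function.ne_iff.mp hwc0
  have hi₀' : wc i₀ ≠ 0 := hi₀
  have hcases : (wc i₀).re ≠ 0 ∨ (wc i₀).im ≠ 0 := by
    by_contra h
    push_neg at h
    exact hi₀' (Complex.ext (by simpa using h.1) (by simpa using h.2))
  rcases hcases with hre | him
  · refine ⟨WithLp.toLp 2 (fun j => Complex.reLm (wc j)), ?_, hUmem Complex.reLm⟩
    intro h0
    exact hre (by simpa using congrArg (fun v : EuclideanSpace ℝ (Fin d) => v i₀) h0)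
  · refine ⟨WithLp.toLp 2 (fun j => Complex.imLm (wc j)), ?_, hUmem Complex.imLm⟩
    intro h0
    exact him (by simpa using congrArg (fun v : EuclideanSpace ℝ (Fin d) => v i₀) h0)

lemma span_orbit_eq_top (hirr : Irreducible ((A.map ((↑) : ℤ → ℚ)).charpoly))
    (w : Fin d → ℚ) (hw : w ≠ 0) :
    Submodule.span ℚ (Set.range fun k : ℕ => ((A.map ((↑) : ℤ → ℚ)) ^ k).mulVec w) = ⊤ := by
  classical
  set Q : Matrix (Fin d) (Fin d) ℚ := A.map ((↑) : ℤ → ℚ) with hQdef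
  have hd : d ≠ 0 := by
    rintro rfl
    exact hirr.not_isUnit (by
      rw [Matrix.charpoly, Matrix.det_isEmpty]
      exact isUnit_one)
  haveI : Nonempty (Fin d) := ⟨⟨0, Nat.pos_of_ne_zero hd⟩⟩
  have hdim : Q.charpoly.natDegree = d := by
    rw [Matrix.charpoly_natDegree_eq_dim]
    exact Fintype.card_fin d
  have hdimdeg : Q.charpoly.degree = d := by
    rw [Polynomial.degree_eq_natDegree Q.charpoly_monic.ne_zero, hdim]
  let φ : Matrix (Fin d) (Fin d) ℚ →ₗ[ℚ] (Fin d → ℚ) :=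
    { toFun := fun N => N.mulVec w
      map_add' := fun N₁ N₂ => Matrix.add_mulVec _ _ _
      map_smul' := fun c N => by simpa using Matrix.smul_mulVec c N w }
  have hli : LinearIndependent ℚ (fun i : Fin d => (Q ^ (i : ℕ)).mulVec w) := by
    rw [Fintype.linearIndependent_iff]
    intro g hg
    by_contra hgne
    push_neg at hgne
    obtain ⟨i₀, hi₀⟩ := hgne
    set p : Polynomial ℚ := ∑ i : Fin d, Polynomial.monomial (i : ℕ) (g i) with hp
    have hcoeff : ∀ i : Fin d, p.coeff (i : ℕ) = g i := by
      intro i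
      rw [hp, Polynomial.finset_sum_coeff]
      rw [Finset.sum_eq_single i]
      · rw [Polynomial.coeff_monomial]; simp
      · intro j _ hji
        rw [Polynomial.coeff_monomial]
        have : (j : ℕ) ≠ (i : ℕ) := fun h => hji (Fin.ext h)
        simp [this]
      · intro h; exact absurd (Finset.mem_univ i) h
    have hpne : p ≠ 0 := by
      intro h
      apply hi₀
      rw [← hcoeff i₀, h, Polynomial.coeff_zero]
    have hpdeg : p.degree < Q.charpoly.degree := by
      rw [hdimdeg]
      refine lt_of_le_of_lt (Polynomial.degree_sum_le _ _) ?_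
      rw [Finset.sup_lt_iff (by exact_mod_cast WithBot.bot_lt_coe d)]
      intro i _
      refine lt_of_le_of_lt (Polynomial.degree_monomial_le _ _) ?_
      exact_mod_cast i.isLt
    have hpw : (Polynomial.aeval Q p).mulVec w = 0 := by
      show φ (Polynomial.aeval Q p) = 0
      rw [hp, map_sum (Polynomial.aeval Q), map_sum φ]
      have heach : ∀ i : Fin d, φ ((Polynomial.aeval Q) (Polynomial.monomial (i : ℕ) (g i)))
          = g i • (Q ^ (i : ℕ)).mulVec w := by
        intro i
        rw [Polynomial.aeval_monomial, Algebra.algebraMap_eq_smul_one, smul_mul_assoc,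
          one_mul, _root_.map_smul]
        rfl
      rw [Finset.sum_congr rfl fun i _ => heach i]
      exact hg
    have hndvd : ¬ (Q.charpoly ∣ p) := fun hdvd =>
      hpne (Polynomial.eq_zero_of_dvd_of_degree_lt hdvd hpdeg)
    have hcop : IsCoprime Q.charpoly p := hirr.coprime_iff_not_dvd.mpr hndvd
    obtain ⟨a, b, hab⟩ := hcop
    have hone := congrArg (fun r => ((Polynomial.aeval Q) r).mulVec w) hab
    simp only [map_add, _root_.map_mul, _root_.map_one] at hone
    rw [Matrix.add_mulVec, ← Matrix.mulVec_mulVec, ← Matrix.mulVec_mulVec,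
      Matrix.aeval_self_charpoly, Matrix.zero_mulVec, Matrix.mulVec_zero, hpw,
      Matrix.mulVec_zero, Matrix.one_mulVec] at hone
    exact hw (by simpa using hone.symm)
  have hcard : Fintype.card (Fin d) = Module.finrank ℚ (Fin d → ℚ) := by
    rw [Module.finrank_fintype_fun_eq_card]
  have hbs : Submodule.span ℚ (Set.range fun i : Fin d => (Q ^ (i : ℕ)).mulVec w) = ⊤ := by
    rw [← coe_basisOfLinearIndependentOfCardEqFinrank hli hcard]
    exact (basisOfLinearIndependentOfCardEqFinrank hli hcard).span_eq
  rw [eq_top_iff, ← hbs]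
  apply Submodule.span_mono
  rintro _ ⟨i, rfl⟩
  exact ⟨(i : ℕ), rfl⟩

lemma V_eq_top (hirr : Irreducible ((A.map ((↑) : ℤ → ℚ)).charpoly))
    (n₀ : Fin d → ℤ) (hn0 : n₀ ≠ 0) (hnV : intVec n₀ ∈ V A) : V A = ⊤ := by
  classical
  set Q : Matrix (Fin d) (Fin d) ℚ := A.map ((↑) : ℤ → ℚ) with hQdef
  set w : Fin d → ℚ := fun i => (n₀ i : ℚ) with hwdef
  have hw0 : w ≠ 0 := by
    intro h
    apply hn0
    funext i
    have h1 : ((n₀ i : ℚ)) = 0 := congrFun h i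
    exact_mod_cast h1
  have hspan := span_orbit_eq_top A hirr w hw0
  set c : (Fin d → ℚ) → EuclideanSpace ℝ (Fin d) := fun u => WithLp.toLp 2 (fun i => ((u i : ℚ) : ℝ)) with hcdef
  have hc_mulvec : ∀ (N : Matrix (Fin d) (Fin d) ℚ) (u : Fin d → ℚ),
      c (N.mulVec u) = mulVecE (N.map ((↑) : ℚ → ℝ)) (c u) := by
    intro N u
    ext i
    show ((Rat.castHom ℝ) ((N.mulVec u) i)) = ((N.map ⇑(Rat.castHom ℝ)).mulVec (⇑(Rat.castHom ℝ) ∘ u)) i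
    rw [RingHom.map_mulVec]
  have hQ1 : Q.map ((↑) : ℚ → ℝ) = B A := by
    rw [hQdef, Matrix.map_map]
    show A.map ((Rat.cast : ℚ → ℝ) ∘ (Int.cast : ℤ → ℚ)) = A.map ((↑) : ℤ → ℝ)
    congr 1
  have horb : ∀ k : ℕ, c ((Q ^ k).mulVec w) ∈ V A := by
    intro k
    induction k with
    | zero =>
      rw [pow_zero, Matrix.one_mulVec]
      have : c w = intVec n₀ := by ext i; rw [hcdef, hwdef]; show ((((n₀ i : ℤ) : ℚ)) : ℝ) = _; push_cast; rfl
      rw [this]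
      exact hnV
    | succ k ih =>
      have h2 : c ((Q ^ (k + 1)).mulVec w) = mulVecE (B A) (c ((Q ^ k).mulVec w)) := by
        rw [pow_succ', ← Matrix.mulVec_mulVec, hc_mulvec, hQ1]
      rw [h2]
      exact V_inv A _ ih
  have hall : ∀ u : Fin d → ℚ, c u ∈ V A := by
    intro u
    have hu : u ∈ Submodule.span ℚ (Set.range fun k : ℕ => (Q ^ k).mulVec w) := by
      rw [hspan]; trivial
    refine Submodule.span_induction (p := fun u _ => c u ∈ V A) ?_ ?_ ?_ ?_ hu
    · rintro _ ⟨k, rfl⟩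
      exact horb k
    · show c 0 ∈ V A
      have : c 0 = 0 := by ext i; show ((0 : ℚ) : ℝ) = _; norm_num
      rw [this]; exact Submodule.zero_mem _
    · intro u v _ _ hcu hcv
      show c (u + v) ∈ V A
      have : c (u + v) = c u + c v := by ext i; show ((u i + v i : ℚ) : ℝ) = _; push_cast; rfl
      rw [this]; exact Submodule.add_mem _ hcu hcv
    · intro q u _ hcu
      show c (q • u) ∈ V A
      have : c (q • u) = (q : ℝ) • c u := by
        ext i; show ((q * u i : ℚ) : ℝ) = _; push_cast; rfl
      rw [this]; exact Submodule.smul_mem _ _ hcu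
  rw [eq_top_iff]
  have hbasis : ∀ i : Fin d, EuclideanSpace.single i (1 : ℝ) ∈ V A := by
    intro i
    have h1 : c (fun j => if j = i then 1 else 0) = EuclideanSpace.single i (1 : ℝ) := by
      ext j
      show (((if j = i then (1 : ℚ) else 0) : ℚ) : ℝ) = EuclideanSpace.single i (1 : ℝ) j
      rw [EuclideanSpace.single_apply]
      by_cases h : j = i <;> simp [h]
    rw [← h1]
    exact hall _
  have hspan2 : Submodule.span ℝ (Set.range fun i : Fin d => EuclideanSpace.single i (1 : ℝ)) = ⊤ := by
    have hb := (EuclideanSpace.basisFun (Fin d) ℝ).toBasis.span_eq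
    have hco : ⇑(EuclideanSpace.basisFun (Fin d) ℝ).toBasis
        = fun i : Fin d => EuclideanSpace.single i (1 : ℝ) := by
      rw [OrthonormalBasis.coe_toBasis]
      funext i
      exact EuclideanSpace.basisFun_apply (Fin d) ℝ i
    rw [hco] at hb
    exact hb
  rw [← hspan2]
  rw [Submodule.span_le]
  rintro _ ⟨i, rfl⟩
  exact hbasis i

lemma dense_G0 (hd : d ≠ 0) (hdet : (B A).det ≠ 0)
    (hhyp : ∀ μ : ℂ, ((A.map ((↑) : ℤ → ℂ)).charpoly).IsRoot μ → ‖μ‖ ≠ 1)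
    (hirr : Irreducible ((A.map ((↑) : ℤ → ℚ)).charpoly)) :
    Dense ((G0 A : Set (EuclideanSpace ℝ (Fin d)))) := by
  classical
  obtain ⟨v, hv0, hvU⟩ := U_nontrivial A hd hdet hhyp
  by_cases hcase : ∃ n : Fin d → ℤ, n ≠ 0 ∧ intVec n ∈ V A
  · obtain ⟨n, hn0, hnV⟩ := hcase
    have hVtop := V_eq_top A hirr n hn0 hnV
    rw [dense_iff_closure_eq]
    apply Set.eq_univ_of_forall
    intro z
    have hz : z ∈ Gc A := V_subset_Gc A z (by rw [hVtop]; trivial)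
    exact hz
  · exfalso
    push_neg at hcase
    obtain ⟨ε, hε, hsep⟩ := exists_eps A
    set Vs := V A with hVs
    let p := orthogonalProjection Vs
    let qlin : EuclideanSpace ℝ (Fin d) →ₗ[ℤ] EuclideanSpace ℝ (Fin d) :=
      (LinearMap.id - Vs.subtype.comp (p : EuclideanSpace ℝ (Fin d) →L[ℝ] Vs).toLinearMap).restrictScalars ℤ
    have hq_def : ∀ x, qlin x = x - (p x : EuclideanSpace ℝ (Fin d)) := fun x => rfl
    have hq_orth : ∀ x, qlin x ∈ Vsᗮ := fun x => by
      rw [hq_def]; exact Vs.sub_starProjection_mem_orthogonal x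
    have hq_ker : ∀ x, qlin x = 0 → x ∈ Vs := by
      intro x hx
      rw [hq_def] at hx
      have : x = (p x : EuclideanSpace ℝ (Fin d)) := by
        have := sub_eq_zero.mp hx
        exact this
      rw [this]
      exact Submodule.coe_mem _
    let jlin : (Fin d → ℤ) →ₗ[ℤ] EuclideanSpace ℝ (Fin d) :=
      { toFun := intVec
        map_add' := fun a b => by
          ext i; show ((a i + b i : ℤ) : ℝ) = _; push_cast; rfl
        map_smul' := fun z a => by
          ext i
          show ((z * a i : ℤ) : ℝ) = (z • intVec a) i
          rw [show (z • intVec a) i = z • ((a i : ℤ) : ℝ) from rfl, zsmul_eq_mul]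
          push_cast; ring }
    let f : (Fin d → ℤ) →ₗ[ℤ] EuclideanSpace ℝ (Fin d) := qlin.comp jlin
    have hjinj : Function.Injective jlin := by
      intro a b hab
      funext i
      have h1 : ((a i : ℤ) : ℝ) = ((b i : ℤ) : ℝ) := congrArg (fun v : EuclideanSpace ℝ (Fin d) => v i) hab
      exact_mod_cast h1
    have hfinj : Function.Injective f := by
      rw [injective_iff_map_eq_zero]
      intro n hn
      have h1 : intVec n ∈ Vs := hq_ker _ hn
      by_contra hne
      exact (hcase n hne) h1
    let M : Submodule ℤ (EuclideanSpace ℝ (Fin d)) := LinearMap.range f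
    have hMorth : (M : Set (EuclideanSpace ℝ (Fin d))) ⊆ (Vsᗮ : Set (EuclideanSpace ℝ (Fin d))) := by
      rintro _ ⟨n, rfl⟩
      exact hq_orth _
    have hMG : ∀ z ∈ M, z ∈ Gc A := by
      rintro _ ⟨n, rfl⟩
      show qlin (jlin n) ∈ Gc A
      rw [hq_def]
      have h1 : jlin n ∈ Gc A :=
        (AddSubgroup.le_topologicalClosure _) (AddSubgroup.mem_sup_left ⟨n, rfl⟩)
      have h2 : (p (jlin n) : EuclideanSpace ℝ (Fin d)) ∈ Gc A :=
        V_subset_Gc A _ (Submodule.coe_mem _)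
      exact AddSubgroup.sub_mem _ h1 h2
    haveI hMdisc : DiscreteTopology M := by
      rw [discreteTopology_iff_isOpen_singleton_zero, isOpen_induced_iff]
      refine ⟨Metric.ball 0 ε, Metric.isOpen_ball, ?_⟩
      rw [Set.eq_singleton_iff_unique_mem]
      constructor
      · exact Set.mem_preimage.mpr (by simpa using hε)
      · rintro ⟨x, hx⟩ hmem
        have h1 : ‖x‖ < ε := by simpa [mem_ball_zero_iff] using hmem
        have h2 : x = 0 := hsep x (hMG x hx) (hMorth hx) h1
        exact Subtype.ext h2
    have h1 : Module.finrank ℤ M = d := by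
      have e := LinearEquiv.ofInjective f hfinj
      rw [← e.finrank_eq]
      rw [Module.finrank_fintype_fun_eq_card, Fintype.card_fin]
    have h2 : Module.finrank ℤ M = Module.finrank ℝ (Submodule.span ℝ (M : Set (EuclideanSpace ℝ (Fin d)))) :=
      discrete_finrank_eq M
    have h3 : Submodule.span ℝ (M : Set (EuclideanSpace ℝ (Fin d))) ≤ Vsᗮ :=
      Submodule.span_le.mpr hMorth
    have h4 : Module.finrank ℝ (Submodule.span ℝ (M : Set (EuclideanSpace ℝ (Fin d))))
        ≤ Module.finrank ℝ Vsᗮ := Submodule.finrank_mono h3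
    have h5 : Module.finrank ℝ Vs + Module.finrank ℝ Vsᗮ = d := by
      have h := Submodule.finrank_add_finrank_orthogonal Vs
      rw [finrank_euclideanSpace_fin] at h
      exact h
    have h6 : Module.finrank ℝ Vs ≠ 0 := by
      intro h
      have hbot : Vs = ⊥ := Submodule.finrank_eq_zero.mp h
      have hvV : v ∈ Vs := U_le_V A hvU
      rw [hbot] at hvV
      exact hv0 ((Submodule.mem_bot ℝ).mp hvV)
    omega

lemma U_inv_pow (k : ℕ) : ∀ v ∈ U A, mulVecE ((B A) ^ k) v ∈ U A := by
  induction k with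
  | zero =>
    intro v hv
    rw [pow_zero]
    have h1 : mulVecE (1 : Matrix (Fin d) (Fin d) ℝ) v = v := by
      show WithLp.toLp 2 ((1 : Matrix (Fin d) (Fin d) ℝ).mulVec (WithLp.ofLp v)) = _
      rw [Matrix.one_mulVec, WithLp.toLp_ofLp]
    rw [h1]
    exact hv
  | succ k ih =>
    intro v hv
    rw [pow_succ, mulVecE_mul]
    exact ih _ (U_inv A v hv)

end Main

end Stmt13Aux


/-- Let `A ∈ M_d(ℤ) ∩ GL_d(ℝ)` be hyperbolic with characteristic
polynomial irreducible over `ℚ`, and let `E^u(A) = {v : A^(-k) v → 0}` be the unstable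
subspace. Then for all `x, y ∈ ℝ^d` there exists a sequence `n_m ∈ A^m ℤ^d` such that
`dist (y + n_m, x + E^u(A)) → 0` as `m → ∞` (equivalently, the `E^s(A)`-component of
`y + n_m - x` tends to `0`). -/
theorem stmt13 (d : ℕ) (A : Matrix (Fin d) (Fin d) ℤ)
    (hdet : (A.map ((↑) : ℤ → ℝ)).det ≠ 0)
    (hhyp : ∀ μ : ℂ, (Matrix.charpoly (A.map ((↑) : ℤ → ℂ))).IsRoot μ → ‖μ‖ ≠ 1)
    (hirr : Irreducible (Matrix.charpoly (A.map ((↑) : ℤ → ℚ)))) :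
    ∀ x y : EuclideanSpace ℝ (Fin d),
      ∃ ns : ℕ → EuclideanSpace ℝ (Fin d),
        (∀ m : ℕ, ∃ n : Fin d → ℤ, ns m = mulVecE ((A.map ((↑) : ℤ → ℝ)) ^ m) (intVec n)) ∧
        Filter.Tendsto
          (fun m : ℕ =>
            Metric.infDist (y + ns m)
              {z : EuclideanSpace ℝ (Fin d) |
                Filter.Tendsto
                  (fun k : ℕ => mulVecE ((A.map ((↑) : ℤ → ℝ))⁻¹ ^ k) (z - x))
                  Filter.atTop (nhds 0)})
          Filter.atTop (nhds 0) := by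
  intro x y
  classical
  by_cases hd : d = 0
  · subst hd
    haveI : Subsingleton (EuclideanSpace ℝ (Fin 0)) :=
      ⟨fun a b => by ext i; exact i.elim0⟩
    refine ⟨fun _ => 0, fun m => ⟨0, Subsingleton.elim _ _⟩, ?_⟩
    have hmem : (y + 0) ∈ {z : EuclideanSpace ℝ (Fin 0) |
        Filter.Tendsto (fun k : ℕ => mulVecE ((A.map ((↑) : ℤ → ℝ))⁻¹ ^ k) (z - x))
          Filter.atTop (nhds 0)} := by
      show Filter.Tendsto _ _ _
      have h1 : (fun k : ℕ => mulVecE ((A.map ((↑) : ℤ → ℝ))⁻¹ ^ k) ((y + 0) - x))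
          = fun _ => 0 := funext fun k => Subsingleton.elim _ _
      rw [h1]
      exact tendsto_const_nhds
    have h2 : (fun m : ℕ => Metric.infDist (y + 0) {z : EuclideanSpace ℝ (Fin 0) |
        Filter.Tendsto (fun k : ℕ => mulVecE ((A.map ((↑) : ℤ → ℝ))⁻¹ ^ k) (z - x))
          Filter.atTop (nhds 0)}) = fun _ => 0 :=
      funext fun m => Metric.infDist_zero_of_mem hmem
    rw [h2]
    exact tendsto_const_nhds
  · set S := {z : EuclideanSpace ℝ (Fin d) |
        Filter.Tendsto (fun k : ℕ => mulVecE ((A.map ((↑) : ℤ → ℝ))⁻¹ ^ k) (z - x))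
          Filter.atTop (nhds 0)} with hSdef
    have hdense := Stmt13Aux.dense_G0 A hd hdet hhyp hirr
    have key : ∀ m : ℕ, ∃ n : Fin d → ℤ,
        Metric.infDist (y + mulVecE ((A.map ((↑) : ℤ → ℝ)) ^ m) (intVec n)) S
          < 1 / (m + 1) := by
      intro m
      set Bm : Matrix (Fin d) (Fin d) ℝ := (A.map ((↑) : ℤ → ℝ)) ^ m with hBm
      have hdetm : IsUnit Bm.det := by
        rw [hBm, Matrix.det_pow]
        exact (Ne.isUnit hdet).pow m
      let eqv : EuclideanSpace ℝ (Fin d) ≃ₗ[ℝ] EuclideanSpace ℝ (Fin d) :=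
        LinearEquiv.ofLinear (Matrix.toEuclideanLin Bm) (Matrix.toEuclideanLin Bm⁻¹)
          (by
            apply LinearMap.ext
            intro z
            show mulVecE Bm (mulVecE Bm⁻¹ z) = z
            rw [← Stmt13Aux.mulVecE_mul, Matrix.mul_nonsing_inv _ hdetm]
            show WithLp.toLp 2 ((1 : Matrix (Fin d) (Fin d) ℝ).mulVec (WithLp.ofLp z)) = _
            rw [Matrix.one_mulVec, WithLp.toLp_ofLp])
          (by
            apply LinearMap.ext
            intro z
            show mulVecE Bm⁻¹ (mulVecE Bm z) = z
            rw [← Stmt13Aux.mulVecE_mul, Matrix.nonsing_inv_mul _ hdetm]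
            show WithLp.toLp 2 ((1 : Matrix (Fin d) (Fin d) ℝ).mulVec (WithLp.ofLp z)) = _
            rw [Matrix.one_mulVec, WithLp.toLp_ofLp])
      let homeo := eqv.toContinuousLinearEquiv.toHomeomorph
      have himg : Dense (⇑eqv '' (Stmt13Aux.G0 A : Set (EuclideanSpace ℝ (Fin d)))) := by
        rw [dense_iff_closure_eq] at hdense ⊢
        have h1 : ⇑eqv = ⇑homeo := rfl
        rw [h1, ← homeo.image_closure, hdense, Set.image_univ]
        exact homeo.range_coe
      obtain ⟨g, hgmem, hgdist⟩ := himg.exists_dist_lt (x - y)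
        (show (0 : ℝ) < 1 / (m + 1) by positivity)
      obtain ⟨h0, hh0, rfl⟩ := hgmem
      obtain ⟨l, hl, u, hu, rfl⟩ := AddSubgroup.mem_sup.mp hh0
      obtain ⟨n, rfl⟩ := hl
      have hEq : eqv (Stmt13Aux.latHom n + u) = mulVecE Bm (intVec n) + mulVecE Bm u := by
        show mulVecE Bm (intVec n + u) = _
        exact Stmt13Aux.mulVecE_add Bm _ _
      set u' := mulVecE Bm u with hu'def
      have hu' : u' ∈ Stmt13Aux.U A := Stmt13Aux.U_inv_pow A m u hu
      refine ⟨n, ?_⟩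
      have hz : (x - u') ∈ S := by
        show Filter.Tendsto _ _ _
        have h1 : (x - u') - x = -u' := by abel
        rw [h1]
        exact (Stmt13Aux.U A).neg_mem hu'
      calc Metric.infDist (y + mulVecE Bm (intVec n)) S
          ≤ dist (y + mulVecE Bm (intVec n)) (x - u') := Metric.infDist_le_dist_of_mem hz
        _ = dist (x - y) (eqv (Stmt13Aux.latHom n + u)) := by
            rw [hEq, dist_eq_norm, dist_eq_norm, ← norm_neg ((x - y) - _)]
            congr 1
            abel
        _ < 1 / (m + 1) := hgdist
    choose nf hnf using key
    refine ⟨fun m => mulVecE ((A.map ((↑) : ℤ → ℝ)) ^ m) (intVec (nf m)),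
      fun m => ⟨nf m, rfl⟩, ?_⟩
    exact squeeze_zero (fun m => Metric.infDist_nonneg) (fun m => (hnf m).le)
      tendsto_one_div_add_atTop_nhds_zero_nat
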